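/- The Cayley graph of the alternating group A₄ with connection set {(1 2)(3 4), (1 3)(2 4), (1 2 3), (1 3 2)} has (-1 + √17)/2 as an eigenvalue; in particular, A₄ admits a non-integral Cayley graph with connection set of size 4. -/
import Mathlib

/-- The Cayley graph of a group `G` with connection set `S`. For a symmetric set `S`
with `1 ∉ S`, `g` and `h` are adjacent iff `h * g⁻¹ ∈ S`. -/
def cayley {G : Type*} [Group G] (S : Set G) : SimpleGraph G :=
  SimpleGraph.fromRel (fun g h => h * g⁻¹ ∈ S)

/-- A finite graph is integral if all eigenvalues of its adjacency matrix are integers. -/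
def IsIntegralGraph {V : Type*} [Finite V] (Γ : SimpleGraph V) : Prop :=
  letI := Fintype.ofFinite V
  letI := Classical.decEq V
  letI : DecidableRel Γ.Adj := Classical.decRel _
  ∀ μ ∈ spectrum ℝ (Γ.adjMatrix ℝ), ∃ z : ℤ, (z : ℝ) = μ

/-- `μ` is an eigenvalue of the adjacency matrix of the finite graph `Γ`. -/
def IsAdjEigenvalue {V : Type*} [Finite V] (Γ : SimpleGraph V) (μ : ℝ) : Prop :=
  letI := Fintype.ofFinite V
  letI := Classical.decEq V
  letI : DecidableRel Γ.Adj := Classical.decRel _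
  μ ∈ spectrum ℝ (Γ.adjMatrix ℝ)

/-- The permutation (1 2)(3 4) as an element of A₄. -/
def a4a : alternatingGroup (Fin 4) := ⟨Equiv.swap 0 1 * Equiv.swap 2 3, by rw [Equiv.Perm.mem_alternatingGroup]; decide⟩

/-- The permutation (1 3)(2 4) as an element of A₄. -/
def a4b : alternatingGroup (Fin 4) := ⟨Equiv.swap 0 2 * Equiv.swap 1 3, by rw [Equiv.Perm.mem_alternatingGroup]; decide⟩

/-- The 3-cycle (1 2 3) as an element of A₄. -/
def a4c : alternatingGroup (Fin 4) := ⟨Equiv.swap 0 2 * Equiv.swap 0 1, by rw [Equiv.Perm.mem_alternatingGroup]; decide⟩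

section Aux
open Matrix

abbrev A4 := alternatingGroup (Fin 4)

/-- the 12 elements of A4 -/
def eFun : Fin 12 → A4 :=
  ![1,
    ⟨Equiv.swap 1 2 * Equiv.swap 2 3, by rw [Equiv.Perm.mem_alternatingGroup]; decide⟩,
    ⟨Equiv.swap 1 2 * Equiv.swap 1 3, by rw [Equiv.Perm.mem_alternatingGroup]; decide⟩,
    ⟨Equiv.swap 0 1 * Equiv.swap 2 3, by rw [Equiv.Perm.mem_alternatingGroup]; decide⟩,
    ⟨Equiv.swap 0 1 * Equiv.swap 1 2, by rw [Equiv.Perm.mem_alternatingGroup]; decide⟩,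
    ⟨Equiv.swap 0 1 * Equiv.swap 1 3, by rw [Equiv.Perm.mem_alternatingGroup]; decide⟩,
    ⟨Equiv.swap 0 1 * Equiv.swap 0 2, by rw [Equiv.Perm.mem_alternatingGroup]; decide⟩,
    ⟨Equiv.swap 0 2 * Equiv.swap 2 3, by rw [Equiv.Perm.mem_alternatingGroup]; decide⟩,
    ⟨Equiv.swap 0 2 * Equiv.swap 1 3, by rw [Equiv.Perm.mem_alternatingGroup]; decide⟩,
    ⟨Equiv.swap 0 1 * Equiv.swap 0 3, by rw [Equiv.Perm.mem_alternatingGroup]; decide⟩,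
    ⟨Equiv.swap 0 2 * Equiv.swap 0 3, by rw [Equiv.Perm.mem_alternatingGroup]; decide⟩,
    ⟨Equiv.swap 0 3 * Equiv.swap 1 2, by rw [Equiv.Perm.mem_alternatingGroup]; decide⟩]

lemma eFun_bij : Function.Bijective eFun := by decide

/-- decidable version of adjacency in our Cayley graph -/
def D (g h : A4) : Prop :=
  g ≠ h ∧ ((h * g⁻¹ = a4a ∨ h * g⁻¹ = a4b ∨ h * g⁻¹ = a4c ∨ h * g⁻¹ = a4c⁻¹) ∨
           (g * h⁻¹ = a4a ∨ g * h⁻¹ = a4b ∨ g * h⁻¹ = a4c ∨ g * h⁻¹ = a4c⁻¹))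

instance : ∀ g h, Decidable (D g h) := fun g h => by unfold D; infer_instance

lemma adj_iff (g h : A4) :
    (cayley ({a4a, a4b, a4c, a4c⁻¹} : Set A4)).Adj g h ↔ D g h := by
  simp [cayley, SimpleGraph.fromRel_adj, Set.mem_insert_iff, Set.mem_singleton_iff, D,
    ne_comm]

noncomputable def Mexp : Matrix (Fin 12) (Fin 12) ℝ :=
  Matrix.of fun i j => if D (eFun i) (eFun j) then (1 : ℝ) else 0

set_option maxHeartbeats 1000000 in
def MBfun : Fin 12 → Fin 12 → Bool :=
  ![![false, false, false, true, true, false, true, false, true, false, false, false],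
    ![false, false, false, true, false, true, true, true, false, false, false, false],
    ![false, false, false, false, true, true, false, true, true, false, false, false],
    ![true, true, false, false, false, false, false, true, false, false, false, true],
    ![true, false, true, false, false, false, true, false, false, true, false, false],
    ![false, true, true, false, false, false, false, false, true, false, true, false],
    ![true, true, false, false, true, false, false, false, false, false, true, false],
    ![false, true, true, true, false, false, false, false, false, true, false, false],
    ![true, false, true, false, false, true, false, false, false, false, false, true],
    ![false, false, false, false, true, false, false, true, false, false, true, true],
    ![false, false, false, false, false, true, true, false, false, true, false, true],
    ![false, false, false, true, false, false, false, false, true, true, true, false]]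

lemma hD : ∀ i j : Fin 12, decide (D (eFun i) (eFun j)) = MBfun i j := by decide

lemma hDP : ∀ i j : Fin 12, D (eFun i) (eFun j) ↔ MBfun i j = true := fun i j => by
  rw [← hD i j, decide_eq_true_iff]

lemma mexp_eq : Mexp = Matrix.of fun i j => if MBfun i j = true then (1 : ℝ) else 0 := by
  ext i j
  exact if_congr (hDP i j) rfl rfl

noncomputable def vvec : Fin 12 → ℝ :=
  ![4, 4, -2 - 2*Real.sqrt 17, 3 + Real.sqrt 17, -1 + Real.sqrt 17, -7 - Real.sqrt 17,
    3 + Real.sqrt 17, -1 + Real.sqrt 17, -7 - Real.sqrt 17, 4, 0, 0]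

set_option maxHeartbeats 1000000 in
set_option maxRecDepth 4000 in
lemma eigen_eq : Mexp *ᵥ vvec = ((-1 + Real.sqrt 17) / 2) • vvec := by
  have hs : Real.sqrt 17 ^ 2 = 17 := Real.sq_sqrt (by norm_num)
  rw [mexp_eq, funext_iff]
  simp only [Fin.forall_fin_succ, IsEmpty.forall_iff, and_true]
  refine ⟨?_, ?_, ?_, ?_, ?_, ?_, ?_, ?_, ?_, ?_, ?_, ?_⟩
  · simp only [Matrix.mulVec, dotProduct, Fin.sum_univ_succ, Finset.univ_eq_empty,
      Finset.sum_empty, Matrix.of_apply, Matrix.cons_val_zero, Matrix.cons_val_succ,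
      Pi.smul_apply, smul_eq_mul, MBfun, vvec, add_zero, if_true, if_false,
      Bool.false_eq_true]
    linear_combination (0 : ℝ) * hs
  · simp only [Matrix.mulVec, dotProduct, Fin.sum_univ_succ, Finset.univ_eq_empty,
      Finset.sum_empty, Matrix.of_apply, Matrix.cons_val_zero, Matrix.cons_val_succ,
      Pi.smul_apply, smul_eq_mul, MBfun, vvec, add_zero, if_true, if_false,
      Bool.false_eq_true]
    linear_combination (0 : ℝ) * hs
  · simp only [Matrix.mulVec, dotProduct, Fin.sum_univ_succ, Finset.univ_eq_empty,
      Finset.sum_empty, Matrix.of_apply, Matrix.cons_val_zero, Matrix.cons_val_succ,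
      Pi.smul_apply, smul_eq_mul, MBfun, vvec, add_zero, if_true, if_false,
      Bool.false_eq_true]
    linear_combination (1 : ℝ) * hs
  · simp only [Matrix.mulVec, dotProduct, Fin.sum_univ_succ, Finset.univ_eq_empty,
      Finset.sum_empty, Matrix.of_apply, Matrix.cons_val_zero, Matrix.cons_val_succ,
      Pi.smul_apply, smul_eq_mul, MBfun, vvec, add_zero, if_true, if_false,
      Bool.false_eq_true]
    linear_combination (-1/2 : ℝ) * hs
  · simp only [Matrix.mulVec, dotProduct, Fin.sum_univ_succ, Finset.univ_eq_empty,
      Finset.sum_empty, Matrix.of_apply, Matrix.cons_val_zero, Matrix.cons_val_succ,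
      Pi.smul_apply, smul_eq_mul, MBfun, vvec, add_zero, if_true, if_false,
      Bool.false_eq_true]
    linear_combination (-1/2 : ℝ) * hs
  · simp only [Matrix.mulVec, dotProduct, Fin.sum_univ_succ, Finset.univ_eq_empty,
      Finset.sum_empty, Matrix.of_apply, Matrix.cons_val_zero, Matrix.cons_val_succ,
      Pi.smul_apply, smul_eq_mul, MBfun, vvec, add_zero, if_true, if_false,
      Bool.false_eq_true]
    linear_combination (1/2 : ℝ) * hs
  · simp only [Matrix.mulVec, dotProduct, Fin.sum_univ_succ, Finset.univ_eq_empty,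
      Finset.sum_empty, Matrix.of_apply, Matrix.cons_val_zero, Matrix.cons_val_succ,
      Pi.smul_apply, smul_eq_mul, MBfun, vvec, add_zero, if_true, if_false,
      Bool.false_eq_true]
    linear_combination (-1/2 : ℝ) * hs
  · simp only [Matrix.mulVec, dotProduct, Fin.sum_univ_succ, Finset.univ_eq_empty,
      Finset.sum_empty, Matrix.of_apply, Matrix.cons_val_zero, Matrix.cons_val_succ,
      Pi.smul_apply, smul_eq_mul, MBfun, vvec, add_zero, if_true, if_false,
      Bool.false_eq_true]
    linear_combination (-1/2 : ℝ) * hs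
  · simp only [Matrix.mulVec, dotProduct, Fin.sum_univ_succ, Finset.univ_eq_empty,
      Finset.sum_empty, Matrix.of_apply, Matrix.cons_val_zero, Matrix.cons_val_succ,
      Pi.smul_apply, smul_eq_mul, MBfun, vvec, add_zero, if_true, if_false,
      Bool.false_eq_true]
    linear_combination (1/2 : ℝ) * hs
  · simp only [Matrix.mulVec, dotProduct, Fin.sum_univ_succ, Finset.univ_eq_empty,
      Finset.sum_empty, Matrix.of_apply, Matrix.cons_val_zero, Matrix.cons_val_succ,
      Pi.smul_apply, smul_eq_mul, MBfun, vvec, add_zero, if_true, if_false,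
      Bool.false_eq_true]
    linear_combination (0 : ℝ) * hs
  · simp only [Matrix.mulVec, dotProduct, Fin.sum_univ_succ, Finset.univ_eq_empty,
      Finset.sum_empty, Matrix.of_apply, Matrix.cons_val_zero, Matrix.cons_val_succ,
      Pi.smul_apply, smul_eq_mul, MBfun, vvec, add_zero, if_true, if_false,
      Bool.false_eq_true]
    linear_combination (0 : ℝ) * hs
  · simp only [Matrix.mulVec, dotProduct, Fin.sum_univ_succ, Finset.univ_eq_empty,
      Finset.sum_empty, Matrix.of_apply, Matrix.cons_val_zero, Matrix.cons_val_succ,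
      Pi.smul_apply, smul_eq_mul, MBfun, vvec, add_zero, if_true, if_false,
      Bool.false_eq_true]
    linear_combination (0 : ℝ) * hs

lemma vvec_ne : vvec ≠ 0 := by
  intro h
  have := congrFun h 0
  simp [vvec] at this

lemma mexp_spec : ((-1 + Real.sqrt 17) / 2) ∈ spectrum ℝ Mexp := by
  rw [← AlgEquiv.spectrum_eq (Matrix.toLinAlgEquiv' : Matrix (Fin 12) (Fin 12) ℝ ≃ₐ[ℝ] _) Mexp,
    ← Module.End.hasEigenvalue_iff_mem_spectrum]
  exact Module.End.hasEigenvalue_of_hasEigenvector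
    ⟨Module.End.mem_eigenspace_iff.mpr (by rw [Matrix.toLinAlgEquiv'_apply]; exact eigen_eq),
     vvec_ne⟩

lemma gen_spec {V : Type*} (instF : Fintype V) (instE : DecidableEq V)
    (Γ' : SimpleGraph V) (instR : DecidableRel Γ'.Adj) (e : Fin 12 ≃ V)
    (hadj : ∀ i j : Fin 12, Γ'.Adj (e i) (e j) ↔ D (eFun i) (eFun j)) :
    ((-1 + Real.sqrt 17) / 2) ∈ spectrum ℝ (Γ'.adjMatrix ℝ) := by
  have hspec := AlgEquiv.spectrum_eq (Matrix.reindexAlgEquiv ℝ ℝ e.symm) (Γ'.adjMatrix ℝ)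
  rw [← hspec, Matrix.reindexAlgEquiv_apply]
  have hM : Matrix.reindex e.symm e.symm (Γ'.adjMatrix ℝ) = Mexp := by
    ext i j
    rw [Matrix.reindex_apply, Matrix.submatrix_apply, Equiv.symm_symm,
      SimpleGraph.adjMatrix_apply, if_congr (hadj i j) rfl rfl]
    rfl
  rw [hM]
  exact mexp_spec

end Aux

theorem A4_cayley_not_integral :
    IsAdjEigenvalue (cayley ({a4a, a4b, a4c, a4c⁻¹} : Set (alternatingGroup (Fin 4))))
      ((-1 + Real.sqrt 17) / 2) ∧
    ¬ IsIntegralGraph (cayley ({a4a, a4b, a4c, a4c⁻¹} : Set (alternatingGroup (Fin 4)))) := by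
  have key : IsAdjEigenvalue (cayley ({a4a, a4b, a4c, a4c⁻¹} : Set (alternatingGroup (Fin 4))))
      ((-1 + Real.sqrt 17) / 2) := by
    unfold IsAdjEigenvalue
    exact gen_spec _ _ _ _ (Equiv.ofBijective eFun eFun_bij)
      (fun i j => adj_iff (eFun i) (eFun j))
  refine ⟨key, fun hint => ?_⟩
  obtain ⟨z, hz⟩ := hint _ key
  have h17 : (2 * (z : ℝ) + 1) ^ 2 = 17 := by
    have : (2 : ℝ) * z + 1 = Real.sqrt 17 := by rw [hz]; ring
    rw [this, Real.sq_sqrt] <;> norm_num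
  have hz17 : (2 * z + 1) ^ 2 = 17 := by exact_mod_cast h17
  have h1 : 2 * z + 1 ≤ 4 := by nlinarith
  have h2 : -4 ≤ 2 * z + 1 := by nlinarith
  nlinarith
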